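/- For every nonnegative integer n and real λ, x, the truncated degenerate Bell polynomial of order 1 satisfies x·Bel^{(1)}_{n,λ}(x) = Σ_{m=0}^{n} (1/(m+1)) C(n,m) β_{n-m,λ} Bel_{m+1,λ}(x), where β_{j,λ} are the Carlitz degenerate Bernoulli numbers. -/

import Mathlib

open Finset

def degFall (l x : ℝ) (n : ℕ) : ℝ := ∏ i ∈ Finset.range n, (x - i * l)

def fall (x : ℝ) (n : ℕ) : ℝ := ∏ i ∈ Finset.range n, (x - i)

noncomputable def degExpPS (l : ℝ) : PowerSeries ℝ :=
  PowerSeries.mk fun n => degFall l 1 n / (n.factorial : ℝ)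

/-- recursively defined degenerate Stirling numbers -/
noncomputable def ds (l : ℝ) : ℕ → ℕ → ℝ
  | 0, 0 => 1
  | 0, _+1 => 0
  | n+1, 0 => (0 - (n : ℝ) * l) * ds l n 0
  | n+1, k+1 => ds l n k + (((k : ℝ) + 1) - (n : ℝ) * l) * ds l n (k+1)

lemma degFall_succ (l y : ℝ) (n : ℕ) :
    degFall l y (n+1) = degFall l y n * (y - n * l) := Finset.prod_range_succ _ _

lemma fall_succ (y : ℝ) (n : ℕ) : fall y (n+1) = fall y n * (y - n) :=
  Finset.prod_range_succ _ _

lemma degFall_zero (l y : ℝ) : degFall l y 0 = 1 := rfl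
lemma fall_zero (y : ℝ) : fall y 0 = 1 := rfl

lemma ds_eq_zero (l : ℝ) : ∀ n k, n < k → ds l n k = 0 := by
  intro n
  induction n with
  | zero => intro k hk; match k, hk with | k+1, _ => rfl
  | succ n ih =>
    intro k hk
    match k, hk with
    | k+1, hk =>
      rw [ds, ih k (by omega), ih (k+1) (by omega)]
      ring

lemma ds_zero (l : ℝ) : ∀ n, 1 ≤ n → ds l n 0 = 0 := by
  intro n
  induction n with
  | zero => omega
  | succ n ih =>
    intro _
    rw [ds]
    rcases Nat.eq_zero_or_pos n with h | h
    · subst h; simp [ds]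
    · rw [ih h]; ring

/-- the recursive Stirling numbers satisfy the defining relation -/
lemma ds_spec (l : ℝ) : ∀ (n : ℕ) (y : ℝ),
    degFall l y n = ∑ k ∈ Finset.range (n + 1), ds l n k * fall y k := by
  intro n
  induction n with
  | zero => intro y; simp [degFall, fall, ds]
  | succ n ih =>
    intro y
    rw [degFall_succ, ih]
    rw [Finset.sum_mul]
    have key : ∀ k : ℕ, ds l n k * fall y k * (y - n * l)
        = ds l n k * fall y (k+1) + (((k:ℝ)) - n*l) * ds l n k * fall y k := by
      intro k
      have : (y - (n:ℝ) * l) = (y - k) + ((k:ℝ) - n * l) := by ring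
      rw [this, fall_succ]
      ring
    rw [Finset.sum_congr rfl (fun k _ => key k), Finset.sum_add_distrib]
    rw [show ∑ k ∈ Finset.range (n+1), ds l n k * fall y (k+1)
        = ∑ k ∈ Finset.range (n+2), (if k = 0 then 0 else ds l n (k-1) * fall y k) by
      conv_rhs => rw [Finset.sum_range_succ']
      simp]
    rw [show ∑ k ∈ Finset.range (n+1), (((k:ℝ)) - n*l) * ds l n k * fall y k
        = ∑ k ∈ Finset.range (n+2), (((k:ℝ)) - n*l) * ds l n k * fall y k by
      conv_rhs => rw [Finset.sum_range_succ]
      rw [ds_eq_zero l n (n+1) (by omega)]; ring]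
    rw [← Finset.sum_add_distrib]
    refine Finset.sum_congr rfl (fun k hk => ?_)
    match k with
    | 0 =>
      simp only [if_pos rfl, ds]
      push_cast
      ring
    | k+1 =>
      simp only [if_neg (Nat.succ_ne_zero k)]
      rw [show (k+1) - 1 = k from rfl]
      simp only [ds]
      push_cast
      ring

lemma fall_nat_eq_zero {j k : ℕ} (h : j < k) : fall (j:ℝ) k = 0 := by
  apply Finset.prod_eq_zero (Finset.mem_range.2 h)
  simp

lemma prod_id_succ : ∀ j : ℕ, ∏ i ∈ Finset.range j, (i + 1) = j.factorial := by
  intro j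
  induction j with
  | zero => rfl
  | succ j ih => rw [Finset.prod_range_succ, ih, Nat.factorial_succ]; ring

lemma fall_nat_self (j : ℕ) : fall (j:ℝ) j = (j.factorial : ℝ) := by
  have h1 : fall (j:ℝ) j = ((∏ i ∈ Finset.range j, (j - i) : ℕ) : ℝ) := by
    rw [Nat.cast_prod]
    refine Finset.prod_congr rfl (fun i hi => ?_)
    rw [Nat.cast_sub (le_of_lt (Finset.mem_range.1 hi))]
  rw [h1]
  congr 1
  calc ∏ i ∈ Finset.range j, (j - i) = ∏ i ∈ Finset.range j, (j - (j - 1 - i)) :=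
        (Finset.prod_range_reflect (fun i => j - i) j).symm
    _ = ∏ i ∈ Finset.range j, (i + 1) := by
        refine Finset.prod_congr rfl (fun i hi => ?_)
        have := Finset.mem_range.1 hi
        omega
    _ = j.factorial := prod_id_succ j

lemma coeff_unique (n : ℕ) (c : ℕ → ℝ)
    (h : ∀ j : ℕ, j ≤ n → ∑ k ∈ Finset.range (n+1), c k * fall (j:ℝ) k = 0) :
    ∀ k, k ≤ n → c k = 0 := by
  intro k
  induction k using Nat.strong_induction_on with
  | _ k ih =>
    intro hk
    have hs := h k hk
    rw [Finset.sum_eq_single k (fun b hb hbk => ?_) (fun hnk => ?_)] at hs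
    · rw [fall_nat_self] at hs
      have : (k.factorial : ℝ) ≠ 0 := Nat.cast_ne_zero.2 k.factorial_ne_zero
      rcases mul_eq_zero.1 hs with h' | h'
      · exact h'
      · exact absurd h' this
    · rcases lt_or_gt_of_ne hbk with hlt | hgt
      · rw [ih b hlt (le_trans (le_of_lt hlt) hk)]; ring
      · rw [fall_nat_eq_zero hgt]; ring
    · exact absurd (Finset.mem_range.2 (by omega)) hnk

lemma S2_eq_ds (l : ℝ) (S2 : ℕ → ℕ → ℝ)
    (hS : ∀ (y : ℝ) (m : ℕ),
      degFall l y m = ∑ k ∈ Finset.range (m + 1), S2 m k * fall y k) :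
    ∀ n k, k ≤ n → S2 n k = ds l n k := by
  intro n k hk
  have h := coeff_unique n (fun k => S2 n k - ds l n k) (fun j _ => by
    have h1 := hS (j:ℝ) n
    have h2 := ds_spec l n (j:ℝ)
    simp only [sub_mul, Finset.sum_sub_distrib]
    rw [← h1, ← h2]
    ring)
  have := h k hk
  linarith [this]

lemma degFall_one_succ (l : ℝ) (d : ℕ) :
    degFall l 1 (d+1) = degFall l 1 d * (1 - d * l) := degFall_succ l 1 d

lemma ds_one (l : ℝ) : ∀ n, 1 ≤ n → ds l n 1 = degFall l 1 n := by
  intro n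
  induction n with
  | zero => omega
  | succ n ih =>
    intro _
    rcases Nat.eq_zero_or_pos n with h | h
    · subst h
      rw [degFall_one_succ]
      simp only [ds]
      rw [degFall_zero]
      push_cast
      ring
    · rw [degFall_one_succ]
      simp only [ds]
      rw [ds_zero l n h, ih h]
      ring

lemma T_rec (l : ℝ) : ∀ n j,
    ∑ m ∈ Finset.range n, ((n.choose m : ℕ) : ℝ) * degFall l 1 (n-m) * ds l m j
      = ((j:ℝ) + 1) * ds l n (j+1) := by
  intro n
  induction n with
  | zero => intro j; simp [ds_eq_zero l 0 (j+1) (by omega)]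
  | succ n ih =>
    intro j
    match j with
    | 0 =>
      rw [Finset.sum_eq_single 0 (fun b hb hb0 => ?_) (fun h0 => ?_)]
      · rw [Nat.choose_zero_right, ds_one l (n+1) (by omega)]
        simp [ds]
      · rw [ds_zero l b (by omega)]; ring
      · exact absurd (Finset.mem_range.2 (by omega)) h0
    | j+1 =>
      -- peel off bottom index
      rw [Finset.sum_range_succ']
      simp only [Nat.succ_sub_succ]
      rw [ds_eq_zero l 0 (j+1) (by omega), Nat.choose_zero_right]
      rw [show ((1:ℕ):ℝ) * degFall l 1 (n+1-0) * 0 = 0 by ring, add_zero]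
      -- split the binomial coefficient
      have hsp : ∀ m, m ∈ Finset.range n →
          (((n+1).choose (m+1) : ℕ) : ℝ) * degFall l 1 (n-m) * ds l (m+1) (j+1)
          = ((n.choose m : ℕ) : ℝ) * degFall l 1 (n-m) * ds l (m+1) (j+1)
            + ((n.choose (m+1) : ℕ) : ℝ) * degFall l 1 (n-m) * ds l (m+1) (j+1) := by
        intro m _
        rw [Nat.choose_succ_succ]
        push_cast
        ring
      rw [Finset.sum_congr rfl hsp, Finset.sum_add_distrib]
      -- second sum: shift index back up
      have hstep2 : ∑ m ∈ Finset.range n,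
            ((n.choose (m+1) : ℕ) : ℝ) * degFall l 1 (n-m) * ds l (m+1) (j+1)
          = ∑ m ∈ Finset.range n,
            ((n.choose m : ℕ) : ℝ) * degFall l 1 (n+1-m) * ds l m (j+1) + ds l n (j+1) := by
        have h1 := Finset.sum_range_succ'
          (fun m => ((n.choose m : ℕ) : ℝ) * degFall l 1 (n+1-m) * ds l m (j+1)) n
        have h2 := Finset.sum_range_succ
          (fun m => ((n.choose m : ℕ) : ℝ) * degFall l 1 (n+1-m) * ds l m (j+1)) n
        simp only [Nat.succ_sub_succ] at h1
        rw [h2] at h1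
        rw [ds_eq_zero l 0 (j+1) (by omega)] at h1
        simp only [Nat.choose_self, Nat.choose_zero_right, Nat.cast_one,
          Nat.sub_self] at h1
        rw [show n+1-n = 1 by omega] at h1
        have e1 : degFall l 1 1 = 1 := by simp [degFall]
        rw [e1] at h1
        linarith [h1]
      rw [hstep2]
      have hcomb : ∀ m ∈ Finset.range n,
          ((n.choose m : ℕ) : ℝ) * degFall l 1 (n-m) * ds l (m+1) (j+1)
            + ((n.choose m : ℕ) : ℝ) * degFall l 1 (n+1-m) * ds l m (j+1)
          = ((n.choose m : ℕ) : ℝ) * degFall l 1 (n-m) * ds l m j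
            + ((j:ℝ) + 2 - n*l) *
              (((n.choose m : ℕ) : ℝ) * degFall l 1 (n-m) * ds l m (j+1)) := by
        intro m hm
        have hm' : m < n := Finset.mem_range.1 hm
        rw [show n+1-m = (n-m)+1 by omega, degFall_one_succ]
        simp only [ds]
        rw [Nat.cast_sub hm'.le]
        push_cast
        ring
      rw [← add_assoc, ← Finset.sum_add_distrib, Finset.sum_congr rfl hcomb,
        Finset.sum_add_distrib, ← Finset.mul_sum, ih j, ih (j+1)]
      simp only [ds]
      push_cast
      ring

lemma conv_identity (l x : ℝ) (n : ℕ) (hn : 1 ≤ n) :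
    ∑ m ∈ Finset.range n, ((n.choose m : ℕ) : ℝ) * degFall l 1 (n-m) *
        (∑ k ∈ Finset.range (m+1), ds l m k * x^(k+1) / ((k:ℝ)+1))
    = ∑ k ∈ Finset.range (n+1), ds l n k * x^k := by
  have hpad : ∀ m ∈ Finset.range n,
      ((n.choose m : ℕ) : ℝ) * degFall l 1 (n-m) *
        (∑ k ∈ Finset.range (m+1), ds l m k * x^(k+1) / ((k:ℝ)+1))
      = ∑ k ∈ Finset.range n, ((n.choose m : ℕ) : ℝ) * degFall l 1 (n-m) *
          (ds l m k * x^(k+1) / ((k:ℝ)+1)) := by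
    intro m hm
    rw [Finset.mul_sum]
    apply Finset.sum_subset
    · exact Finset.range_subset_range.2 (Finset.mem_range.1 hm)
    · intro k _ hk
      rw [ds_eq_zero l m k (by simpa using hk)]
      ring
  rw [Finset.sum_congr rfl hpad, Finset.sum_comm]
  have hinner : ∀ k ∈ Finset.range n,
      ∑ m ∈ Finset.range n, ((n.choose m : ℕ) : ℝ) * degFall l 1 (n-m) *
          (ds l m k * x^(k+1) / ((k:ℝ)+1))
      = ds l n (k+1) * x^(k+1) := by
    intro k _
    have : ∀ m ∈ Finset.range n,
        ((n.choose m : ℕ) : ℝ) * degFall l 1 (n-m) * (ds l m k * x^(k+1) / ((k:ℝ)+1))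
        = (((n.choose m : ℕ) : ℝ) * degFall l 1 (n-m) * ds l m k) *
            (x^(k+1) / ((k:ℝ)+1)) := fun m _ => by ring
    rw [Finset.sum_congr rfl this, ← Finset.sum_mul, T_rec l n k]
    have hk1 : ((k:ℝ)+1) ≠ 0 := by positivity
    field_simp
  rw [Finset.sum_congr rfl hinner]
  rw [Finset.sum_range_succ' (fun k => ds l n k * x^k) n]
  rw [ds_zero l n hn]
  ring

noncomputable def Gser (l x : ℝ) : PowerSeries ℝ :=
  PowerSeries.mk fun m =>
    (∑ k ∈ Finset.range (m+1), ds l m k * x^(k+1) / ((k:ℝ)+1)) / (m.factorial : ℝ)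

noncomputable def Bser (l x : ℝ) : PowerSeries ℝ :=
  PowerSeries.mk fun m =>
    (∑ k ∈ Finset.range (m+2), ds l (m+1) k * x^k) / ((m+1).factorial : ℝ)

lemma coeff_E_sub_one_zero (l : ℝ) :
    PowerSeries.coeff 0 (degExpPS l - 1) = 0 := by
  simp [degExpPS, PowerSeries.coeff_mk, degFall_zero]

lemma coeff_E_sub_one_succ (l : ℝ) (j : ℕ) :
    PowerSeries.coeff (j+1) (degExpPS l - 1)
      = degFall l 1 (j+1) / ((j+1).factorial : ℝ) := by
  simp [degExpPS, PowerSeries.coeff_mk, PowerSeries.coeff_one]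

lemma key_mul (l x : ℝ) :
    Gser l x * (degExpPS l - 1) = PowerSeries.X * Bser l x := by
  ext n
  match n with
  | 0 =>
    rw [PowerSeries.coeff_mul, PowerSeries.coeff_mul]
    rw [Finset.Nat.sum_antidiagonal_eq_sum_range_succ_mk,
      Finset.Nat.sum_antidiagonal_eq_sum_range_succ_mk]
    simp [coeff_E_sub_one_zero]
  | n+1 =>
    rw [PowerSeries.coeff_succ_X_mul, PowerSeries.coeff_mul,
      Finset.Nat.sum_antidiagonal_eq_sum_range_succ_mk]
    rw [Finset.sum_range_succ]
    rw [show n+1-(n+1) = 0 by omega, coeff_E_sub_one_zero, mul_zero, add_zero]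
    have hterm : ∀ i ∈ Finset.range (n+1),
        PowerSeries.coeff i (Gser l x) * PowerSeries.coeff (n+1-i) (degExpPS l - 1)
        = (1 / ((n+1).factorial : ℝ)) * (((n+1).choose i : ℕ) : ℝ) * degFall l 1 (n+1-i) *
            (∑ k ∈ Finset.range (i+1), ds l i k * x^(k+1) / ((k:ℝ)+1)) := by
      intro i hi
      have hi' : i < n+1 := Finset.mem_range.1 hi
      rw [show n+1-i = (n-i)+1 by omega, coeff_E_sub_one_succ]
      rw [Gser, PowerSeries.coeff_mk]
      have hfact : (((n+1).choose i : ℕ) : ℝ) * (i.factorial : ℝ) * (((n-i)+1).factorial : ℝ)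
          = ((n+1).factorial : ℝ) := by
        rw [show (n-i)+1 = (n+1)-i by omega]
        rw [← Nat.cast_mul, ← Nat.cast_mul, ← Nat.choose_mul_factorial_mul_factorial (le_of_lt hi')]
      have h1 : (i.factorial : ℝ) ≠ 0 := Nat.cast_ne_zero.2 i.factorial_ne_zero
      have h2 : (((n-i)+1).factorial : ℝ) ≠ 0 := Nat.cast_ne_zero.2 (Nat.factorial_ne_zero _)
      have h3 : ((n+1).factorial : ℝ) ≠ 0 := Nat.cast_ne_zero.2 (Nat.factorial_ne_zero _)
      field_simp
      rw [show ((n+1).factorial : ℝ) = (((n+1).choose i : ℕ) : ℝ) * (i.factorial : ℝ) * (((n-i)+1).factorial : ℝ) from hfact.symm]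
      ring
    rw [Finset.sum_congr rfl hterm]
    have hfac : ∀ i ∈ Finset.range (n+1),
        (1 / ((n+1).factorial : ℝ)) * (((n+1).choose i : ℕ) : ℝ) * degFall l 1 (n+1-i) *
            (∑ k ∈ Finset.range (i+1), ds l i k * x^(k+1) / ((k:ℝ)+1))
        = (1 / ((n+1).factorial : ℝ)) * ((((n+1).choose i : ℕ) : ℝ) * degFall l 1 (n+1-i) *
            (∑ k ∈ Finset.range (i+1), ds l i k * x^(k+1) / ((k:ℝ)+1))) :=
      fun i _ => by ring
    rw [Finset.sum_congr rfl hfac, ← Finset.mul_sum,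
      conv_identity l x (n+1) (by omega)]
    rw [Bser, PowerSeries.coeff_mk]
    ring

lemma E_sub_one_ne (l : ℝ) : degExpPS l - 1 ≠ 0 := by
  intro h
  have := coeff_E_sub_one_succ l 0
  rw [h] at this
  simp [degFall, Nat.factorial] at this

lemma G_eq_mul (l x : ℝ) (β : ℕ → ℝ)
    (hβ : (PowerSeries.mk fun m => β m / (m.factorial : ℝ)) * (degExpPS l - 1)
      = PowerSeries.X) :
    Gser l x = (PowerSeries.mk fun m => β m / (m.factorial : ℝ)) * Bser l x := by
  apply mul_right_cancel₀ (E_sub_one_ne l)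
  rw [key_mul]
  rw [show (PowerSeries.mk fun m => β m / (m.factorial : ℝ)) * Bser l x * (degExpPS l - 1)
      = ((PowerSeries.mk fun m => β m / (m.factorial : ℝ)) * (degExpPS l - 1)) * Bser l x by
    ring]
  rw [hβ]

theorem truncated_degenerate_Bell_order_one
    (l x : ℝ) (n : ℕ)
    (S2 : ℕ → ℕ → ℝ)
    (hS : ∀ (y : ℝ) (m : ℕ),
      degFall l y m = ∑ k ∈ Finset.range (m + 1), S2 m k * fall y k)
    (β : ℕ → ℝ)
    (hβ : (PowerSeries.mk fun m => β m / (m.factorial : ℝ)) * (degExpPS l - 1)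
      = PowerSeries.X) :
    x * ∑ k ∈ Finset.range (n + 1), S2 n k * x ^ k / ((k : ℝ) + 1)
      = ∑ m ∈ Finset.range (n + 1), (1 / ((m : ℝ) + 1)) * ((n.choose m : ℕ) : ℝ) *
          β (n - m) * (∑ k ∈ Finset.range (m + 2), S2 (m + 1) k * x ^ k) := by
  have hSd := S2_eq_ds l S2 hS
  -- replace S2 by ds everywhere
  rw [Finset.sum_congr rfl (fun k hk => by
    rw [hSd n k (Nat.lt_succ_iff.1 (Finset.mem_range.1 hk))])]
  have hR : (∑ m ∈ Finset.range (n+1), (1/((m:ℝ)+1)) * ((n.choose m : ℕ):ℝ) * β (n-m) *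
      (∑ k ∈ Finset.range (m+2), S2 (m+1) k * x^k))
      = ∑ m ∈ Finset.range (n+1), (1/((m:ℝ)+1)) * ((n.choose m : ℕ):ℝ) * β (n-m) *
      (∑ k ∈ Finset.range (m+2), ds l (m+1) k * x^k) := by
    refine Finset.sum_congr rfl (fun m _ => ?_)
    congr 1
    refine Finset.sum_congr rfl (fun k hk => ?_)
    rw [hSd (m+1) k (Nat.lt_succ_iff.1 (Finset.mem_range.1 hk))]
  rw [hR]
  -- LHS = n! * coeff n Gser
  have hfn : ((n.factorial : ℕ) : ℝ) ≠ 0 := Nat.cast_ne_zero.2 n.factorial_ne_zero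
  have hL : x * ∑ k ∈ Finset.range (n + 1), ds l n k * x ^ k / ((k : ℝ) + 1)
      = (n.factorial : ℝ) * PowerSeries.coeff n (Gser l x) := by
    rw [Gser, PowerSeries.coeff_mk]
    have hcan : (n.factorial : ℝ) *
        ((∑ k ∈ Finset.range (n+1), ds l n k * x^(k+1) / ((k:ℝ)+1)) / (n.factorial : ℝ))
        = ∑ k ∈ Finset.range (n+1), ds l n k * x^(k+1) / ((k:ℝ)+1) := by
      field_simp
    rw [hcan, Finset.mul_sum]
    refine Finset.sum_congr rfl (fun k _ => ?_)
    rw [pow_succ]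
    ring
  rw [hL, G_eq_mul l x β hβ]
  rw [PowerSeries.coeff_mul, Finset.Nat.sum_antidiagonal_eq_sum_range_succ_mk,
    Finset.mul_sum, ← Finset.sum_range_reflect]
  refine Finset.sum_congr rfl (fun m hm => ?_)
  have hm' : m ≤ n := Nat.lt_succ_iff.1 (Finset.mem_range.1 hm)
  rw [show n + 1 - 1 - m = n - m by omega, show n - (n - m) = m by omega]
  rw [PowerSeries.coeff_mk, Bser, PowerSeries.coeff_mk]
  have hfact : (((n).choose m : ℕ) : ℝ) * (m.factorial : ℝ) * ((n-m).factorial : ℝ)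
      = ((n).factorial : ℝ) := by
    rw [← Nat.cast_mul, ← Nat.cast_mul, Nat.choose_mul_factorial_mul_factorial hm']
  have h1 : ((m.factorial : ℕ) : ℝ) ≠ 0 := Nat.cast_ne_zero.2 m.factorial_ne_zero
  have h2 : (((n-m).factorial : ℕ) : ℝ) ≠ 0 := Nat.cast_ne_zero.2 (Nat.factorial_ne_zero _)
  have h3 : (((m+1).factorial : ℕ) : ℝ) ≠ 0 := Nat.cast_ne_zero.2 (Nat.factorial_ne_zero _)
  have hm1 : ((m:ℝ) + 1) ≠ 0 := by positivity
  rw [Nat.factorial_succ (m)]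
  push_cast
  field_simp
  rw [← hfact]
  ring
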